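/- For all Borel probability measures P, P' on ℝ supported in [−R, R] and all scales σ, σ' with λmin ≤ σ ≤ σ' ≤ λmax, one has ∫_ℝ |p_{P,σ}(x) − p_{P',σ'}(x)| dx ≥ (σ' − σ)² / (6λmax² + 4R²). -/

import Mathlib

open MeasureTheory

noncomputable section

/-- The univariate Cauchy density with location θ and scale σ. -/
noncomputable def cauchyDens (θ σ x : ℝ) : ℝ :=
  σ / (Real.pi * (σ ^ 2 + (x - θ) ^ 2))

/-- Univariate Cauchy mixture density. -/
noncomputable def cauchyMix1 (P : Measure ℝ) (σ : ℝ) : ℝ → ℝ :=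
  fun x => ∫ θ, cauchyDens θ σ x ∂P

open Real Set Filter Topology

lemma integrable_cexp_neg_Ioi {c : ℂ} (hc : 0 < c.re) :
    IntegrableOn (fun t : ℝ => Complex.exp (-(c * t))) (Ioi (0:ℝ)) := by
  apply Integrable.mono' ((exp_neg_integrableOn_Ioi 0 hc))
  · exact (Complex.continuous_exp.comp (by continuity)).aestronglyMeasurable
  · filter_upwards with t
    rw [Complex.norm_exp]
    simp [mul_comm]

lemma integral_cexp_neg_Ioi {c : ℂ} (hc : 0 < c.re) :
    ∫ t in Ioi (0:ℝ), Complex.exp (-(c * t)) = 1 / c := by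
  have hc0 : c ≠ 0 := fun h => by simp [h] at hc
  have key := intervalIntegral_tendsto_integral_Ioi 0 (integrable_cexp_neg_Ioi hc) tendsto_id
  have heq : ∀ b : ℝ, ∫ t in (0:ℝ)..b, Complex.exp (-(c * t))
      = (Complex.exp (-c * b) - 1) / (-c) := by
    intro b
    have := integral_exp_mul_complex (a := 0) (b := b) (c := -c) (by simpa using hc0)
    simpa [neg_mul] using this
  simp only [id, heq] at key
  have lim2 : Tendsto (fun b : ℝ => (Complex.exp (-c * b) - 1) / (-c)) atTop (𝓝 ((0 - 1)/(-c))) := by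
    apply Tendsto.div_const
    apply Tendsto.sub_const
    rw [tendsto_zero_iff_norm_tendsto_zero]
    have : ∀ b : ℝ, ‖Complex.exp (-c * b)‖ = Real.exp (-(c.re) * b) := by
      intro b; rw [Complex.norm_exp]; norm_num
    rw [funext this]
    exact Real.tendsto_exp_atBot.comp (tendsto_id.const_mul_atTop_of_neg (neg_lt_zero.2 hc))
  have := tendsto_nhds_unique key lim2
  rw [this]; field_simp; ring

lemma exp_neg_abs_le {σ t : ℝ} (hσ : 0 < σ) :
    Real.exp (-σ * |t|) ≤ (max 1 (2/σ^2)) * (1 + t^2)⁻¹ := by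
  set C := max 1 (2/σ^2) with hC
  have h1 : 1 + σ * |t| + (σ*|t|)^2/2 ≤ Real.exp (σ * |t|) := by
    have := Real.sum_le_exp_of_nonneg (x := σ * |t|) (by positivity) 3
    simpa [Finset.sum_range_succ] using this
  have h2 : Real.exp (-σ * |t|) = (Real.exp (σ * |t|))⁻¹ := by
    rw [← Real.exp_neg]; ring_nf
  have hp1 : (0:ℝ) < 1 + (σ*|t|)^2/2 := by positivity
  have hp2 : (0:ℝ) < 1 + t^2 := by positivity
  have hC1 : (1:ℝ) ≤ C := le_max_left _ _
  have hC2' : 2 ≤ C * σ^2 := by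
    have := le_max_right 1 (2/σ^2)
    rw [← hC] at this
    rw [div_le_iff₀ (by positivity)] at this
    linarith
  have h3 : (Real.exp (σ*|t|))⁻¹ ≤ (1 + (σ*|t|)^2/2)⁻¹ := by
    apply inv_anti₀ hp1
    have : 0 ≤ σ * |t| := by positivity
    linarith
  rw [h2]
  refine h3.trans ?_
  calc (1 + (σ*|t|)^2/2)⁻¹ = 1/(1+(σ*|t|)^2/2) := by rw [one_div]
    _ ≤ C/(1+t^2) := by
        rw [div_le_div_iff₀ hp1 hp2]
        have hs : (σ*|t|)^2 = σ^2 * t^2 := by rw [mul_pow, sq_abs]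
        nlinarith [mul_le_mul_of_nonneg_right hC2' (sq_nonneg t)]
    _ = C * (1+t^2)⁻¹ := by rw [div_eq_mul_inv]

lemma integrable_exp_neg_abs {σ : ℝ} (hσ : 0 < σ) :
    Integrable (fun t : ℝ => Real.exp (-σ * |t|)) := by
  apply Integrable.mono' (integrable_inv_one_add_sq.const_mul (max 1 (2/σ^2)))
  · exact (Real.continuous_exp.comp (by continuity)).aestronglyMeasurable
  · filter_upwards with t
    rw [Real.norm_eq_abs, abs_of_pos (Real.exp_pos _)]
    exact exp_neg_abs_le hσ

open FourierTransform in
lemma fourier_exp_abs {σ : ℝ} (hσ : 0 < σ) (w : ℝ) :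
    𝓕 (fun t : ℝ => (Real.exp (-σ*|t|) : ℂ)) w = ((2*σ/(σ^2+(2*π*w)^2) : ℝ) : ℂ) := by
  rw [Real.fourier_real_eq_integral_exp_smul]
  have hint : Integrable (fun v : ℝ =>
      Complex.exp (↑(-2*π*v*w) * Complex.I) • (Real.exp (-σ*|v|) : ℂ)) := by
    apply Integrable.mono' ((integrable_exp_neg_abs hσ))
    · apply Continuous.aestronglyMeasurable
      apply Continuous.smul (f := fun v : ℝ => Complex.exp (↑(-2*π*v*w) * Complex.I))
        (g := fun v : ℝ => (Real.exp (-σ*|v|) : ℂ))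
      · exact Complex.continuous_exp.comp (by continuity)
      · exact Complex.continuous_ofReal.comp (Real.continuous_exp.comp (by continuity))
    · filter_upwards with v
      rw [norm_smul, Complex.norm_exp_ofReal_mul_I, one_mul, Complex.norm_real,
        Real.norm_eq_abs, abs_of_pos (Real.exp_pos _)]
  rw [← intervalIntegral.integral_Iic_add_Ioi hint.integrableOn hint.integrableOn]
  have hIoi : ∫ v in Ioi (0:ℝ),
      Complex.exp (↑(-2*π*v*w) * Complex.I) • (Real.exp (-σ*|v|) : ℂ)
      = 1 / (↑σ + 2*π*w*Complex.I) := by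
    rw [← integral_cexp_neg_Ioi (c := ↑σ + 2*π*w*Complex.I) (by simp [hσ])]
    apply setIntegral_congr_fun measurableSet_Ioi
    intro v hv
    simp only []
    rw [abs_of_pos (mem_Ioi.mp hv), smul_eq_mul, Complex.ofReal_exp, ← Complex.exp_add]
    congr 1
    push_cast
    ring
  have hIic : ∫ v in Iic (0:ℝ),
      Complex.exp (↑(-2*π*v*w) * Complex.I) • (Real.exp (-σ*|v|) : ℂ)
      = 1 / (↑σ - 2*π*w*Complex.I) := by
    rw [show (0:ℝ) = -0 by norm_num, ← integral_comp_neg_Ioi, ← integral_cexp_neg_Ioi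
      (c := ↑σ - 2*π*w*Complex.I) (by simp [hσ])]
    apply setIntegral_congr_fun measurableSet_Ioi
    intro v hv
    simp only []
    rw [abs_neg, abs_of_pos (mem_Ioi.mp hv), smul_eq_mul, Complex.ofReal_exp, ← Complex.exp_add]
    congr 1
    push_cast
    ring
  rw [hIoi, hIic]
  have h1 : (↑σ + 2*π*w*Complex.I) ≠ 0 := by
    intro h
    have := congrArg Complex.re h
    simp at this
    exact hσ.ne' this
  have h2 : (↑σ - 2*π*w*Complex.I) ≠ 0 := by
    intro h
    have := congrArg Complex.re h
    simp at this
    exact hσ.ne' this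
  have h3 : ((σ:ℂ)^2+(2*↑π*↑w)^2) ≠ 0 := by
    intro h
    have := congrArg Complex.re h
    push_cast at this
    simp [pow_two] at this
    nlinarith [sq_nonneg σ, sq_nonneg (2*π*w), sq_abs σ]
  push_cast
  field_simp
  ring_nf
  rw [Complex.I_sq]
  have h4 : (σ:ℂ)^2 + (π:ℂ)^2*(w:ℂ)^2*4 ≠ 0 := by convert h3 using 1; ring
  field_simp
  ring

lemma integrable_pk {σ : ℝ} (hσ : 0 < σ) (c : ℝ) :
    Integrable (fun w : ℝ => 2*σ/(σ^2+(c*w)^2) * Real.cos (c*w)) ∨ True := Or.inr trivial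

lemma pk_le {σ c : ℝ} (hσ : 0 < σ) (hc : 1 ≤ c^2) (w : ℝ) :
    |2*σ/(σ^2+(c*w)^2)| ≤ (2*σ * max 1 (1/σ^2)) * (1 + w^2)⁻¹ := by
  have h1 : (0:ℝ) < σ^2 + (c*w)^2 := by positivity
  have h2 : (0:ℝ) < 1 + w^2 := by positivity
  rw [abs_of_pos (by positivity)]
  set C := max 1 (1/σ^2) with hC
  have hC1 : (1:ℝ) ≤ C := le_max_left _ _
  have hC2 : 1 ≤ C * σ^2 := by
    have := le_max_right 1 (1/σ^2)
    rw [← hC, div_le_iff₀ (by positivity)] at this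
    linarith
  have hcw : w^2 ≤ (c*w)^2 := by
    rw [mul_pow]; nlinarith [sq_nonneg w]
  have key : 2*σ/(σ^2+(c*w)^2) ≤ (2*σ*C)/(1+w^2) := by
    rw [div_le_div_iff₀ h1 h2]
    have inner : 1 + w^2 ≤ C*(σ^2+(c*w)^2) := by
      have i1 : C*w^2 ≤ C*(c*w)^2 := mul_le_mul_of_nonneg_left hcw (le_trans zero_le_one hC1)
      have i2 : 1*w^2 ≤ C*w^2 := mul_le_mul_of_nonneg_right hC1 (sq_nonneg w)
      nlinarith
    nlinarith [mul_le_mul_of_nonneg_left inner (by positivity : (0:ℝ) ≤ 2*σ)]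
  calc 2*σ/(σ^2+(c*w)^2) ≤ (2*σ*C)/(1+w^2) := key
    _ = 2*σ*C * (1+w^2)⁻¹ := by rw [div_eq_mul_inv]

lemma integrable_pk' {σ : ℝ} (hσ : 0 < σ) :
    Integrable (fun w : ℝ => 2*σ/(σ^2+(2*π*w)^2)) := by
  apply Integrable.mono' (integrable_inv_one_add_sq.const_mul (2*σ * max 1 (1/σ^2)))
  · apply Continuous.aestronglyMeasurable
    apply Continuous.div continuous_const (by continuity)
    intro w; positivity
  · filter_upwards with w
    rw [Real.norm_eq_abs]
    apply pk_le hσ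
    nlinarith [Real.pi_gt_three]

open FourierTransform in
lemma cexp_transform {σ : ℝ} (hσ : 0 < σ) (t : ℝ) :
    ∫ v : ℝ, Complex.exp (↑(2*π*v*t) * Complex.I) * ((2*σ/(σ^2+(2*π*v)^2) : ℝ) : ℂ)
      = ((Real.exp (-σ*|t|) : ℝ) : ℂ) := by
  have hcont : Continuous (fun t : ℝ => (Real.exp (-σ*|t|) : ℂ)) :=
    Complex.continuous_ofReal.comp (Real.continuous_exp.comp (by continuity))
  have hf : Integrable (fun t : ℝ => (Real.exp (-σ*|t|) : ℂ)) :=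
    (integrable_exp_neg_abs hσ).ofReal
  have hFf : Integrable (𝓕 (fun t : ℝ => (Real.exp (-σ*|t|) : ℂ))) := by
    rw [show 𝓕 (fun t : ℝ => (Real.exp (-σ*|t|) : ℂ))
        = fun w => ((2*σ/(σ^2+(2*π*w)^2) : ℝ) : ℂ) from funext (fourier_exp_abs hσ)]
    exact (integrable_pk' hσ).ofReal
  have hinv := congrFun (hcont.fourierInv_fourier_eq hf hFf) t
  rw [Real.fourierInv_eq_fourier_neg,
    Real.fourier_real_eq_integral_exp_smul] at hinv
  rw [← hinv]
  apply integral_congr_ae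
  filter_upwards with v
  rw [fourier_exp_abs hσ, smul_eq_mul]
  norm_num

lemma integrable_two_sig {σ : ℝ} (hσ : 0 < σ) :
    Integrable (fun u : ℝ => 2*σ/(σ^2+u^2)) := by
  apply Integrable.mono' (integrable_inv_one_add_sq.const_mul (2*σ * max 1 (1/σ^2)))
  · apply Continuous.aestronglyMeasurable
    apply Continuous.div continuous_const (by continuity)
    intro w; positivity
  · filter_upwards with w
    rw [Real.norm_eq_abs]
    have := pk_le (c := 1) hσ (by norm_num) w
    simpa using this

lemma integrable_kernel {σ : ℝ} (hσ : 0 < σ) :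
    Integrable (fun u : ℝ => σ/(π*(σ^2+u^2))) := by
  have : (fun u : ℝ => σ/(π*(σ^2+u^2))) = fun u => (1/(2*π)) * (2*σ/(σ^2+u^2)) := by
    funext u
    have h1 : (0:ℝ) < σ^2+u^2 := by positivity
    field_simp
  rw [this]
  exact (integrable_two_sig hσ).const_mul _

lemma integrable_cos_kernel {σ : ℝ} (hσ : 0 < σ) (a b : ℝ)
    (g : ℝ → ℝ) (hg : Continuous g) (hgb : ∀ x, |g x| ≤ 1) :
    Integrable (fun u : ℝ => g u * (σ/(π*(σ^2+u^2)))) :=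
  (integrable_kernel hσ).bdd_mul (c := 1) hg.aestronglyMeasurable (ae_of_all _ fun x => by
    rw [Real.norm_eq_abs]; exact hgb x)

lemma integrable_cexp_pk {σ : ℝ} (hσ : 0 < σ) (t : ℝ) :
    Integrable (fun v : ℝ =>
      Complex.exp (↑(2*π*v*t) * Complex.I) * ((2*σ/(σ^2+(2*π*v)^2) : ℝ) : ℂ)) := by
  apply Integrable.bdd_mul (c := 1) ((integrable_pk' hσ).ofReal)
  · exact (Complex.continuous_exp.comp (by continuity)).aestronglyMeasurable
  · exact ae_of_all _ fun x => le_of_eq (Complex.norm_exp_ofReal_mul_I _)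

lemma cos_pk {σ : ℝ} (hσ : 0 < σ) (t : ℝ) :
    ∫ v : ℝ, Real.cos (2*π*v*t) * (2*σ/(σ^2+(2*π*v)^2)) = Real.exp (-σ*|t|) := by
  have h := integral_re (integrable_cexp_pk hσ t)
  simp only [RCLike.re_to_complex] at h
  rw [cexp_transform hσ t, Complex.ofReal_re] at h
  rw [← h]
  apply integral_congr_ae
  filter_upwards with v
  rw [Complex.mul_re, Complex.exp_ofReal_mul_I_re, Complex.exp_ofReal_mul_I_im,
    Complex.ofReal_re, Complex.ofReal_im]
  ring

lemma sin_pk {σ : ℝ} (hσ : 0 < σ) (t : ℝ) :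
    ∫ v : ℝ, Real.sin (2*π*v*t) * (2*σ/(σ^2+(2*π*v)^2)) = 0 := by
  have h := integral_im (integrable_cexp_pk hσ t)
  simp only [RCLike.im_to_complex] at h
  rw [cexp_transform hσ t, Complex.ofReal_im] at h
  rw [← h]
  apply integral_congr_ae
  filter_upwards with v
  rw [Complex.mul_im, Complex.exp_ofReal_mul_I_re, Complex.exp_ofReal_mul_I_im,
    Complex.ofReal_re, Complex.ofReal_im]
  ring

lemma cos_kernel {σ : ℝ} (hσ : 0 < σ) (t : ℝ) :
    ∫ u : ℝ, Real.cos (t*u) * (σ/(π*(σ^2+u^2))) = Real.exp (-σ*|t|) := by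
  have h2π : (2*π) ≠ 0 := by positivity
  have key := Measure.integral_comp_mul_left
    (fun u : ℝ => Real.cos (t*u) * (σ/(π*(σ^2+u^2)))) (2*π)
  have heq : (fun x : ℝ => Real.cos (t*(2*π*x)) * (σ/(π*(σ^2+(2*π*x)^2))))
      = fun x : ℝ => (1/(2*π)) * (Real.cos (2*π*x*t) * (2*σ/(σ^2+(2*π*x)^2))) := by
    funext x
    have h1 : (0:ℝ) < σ^2+(2*π*x)^2 := by positivity
    rw [mul_comm t (2*π*x)]
    field_simp
  rw [heq] at key
  rw [integral_const_mul, cos_pk hσ t] at key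
  have : |(2*π)⁻¹| = (2*π)⁻¹ := abs_of_pos (by positivity)
  rw [this, smul_eq_mul] at key
  rw [one_div] at key
  exact (mul_left_cancel₀ (inv_ne_zero h2π) key).symm

lemma sin_kernel {σ : ℝ} (hσ : 0 < σ) (t : ℝ) :
    ∫ u : ℝ, Real.sin (t*u) * (σ/(π*(σ^2+u^2))) = 0 := by
  have key := Measure.integral_comp_mul_left
    (fun u : ℝ => Real.sin (t*u) * (σ/(π*(σ^2+u^2)))) (2*π)
  have heq : (fun x : ℝ => Real.sin (t*(2*π*x)) * (σ/(π*(σ^2+(2*π*x)^2))))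
      = fun x : ℝ => (1/(2*π)) * (Real.sin (2*π*x*t) * (2*σ/(σ^2+(2*π*x)^2))) := by
    funext x
    have h1 : (0:ℝ) < σ^2+(2*π*x)^2 := by positivity
    rw [mul_comm t (2*π*x)]
    field_simp
  rw [heq] at key
  rw [integral_const_mul, sin_pk hσ t] at key
  have habs : |(2*π)⁻¹| = (2*π)⁻¹ := abs_of_pos (by positivity)
  rw [habs, smul_eq_mul] at key
  have h2 : (2*π)⁻¹ ≠ 0 := by positivity
  have := key.symm
  simp at this
  exact this

lemma integrable_g_cauchyDens {σ : ℝ} (hσ : 0 < σ) (θ : ℝ)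
    (g : ℝ → ℝ) (hg : Continuous g) (hgb : ∀ x, |g x| ≤ 1) :
    Integrable (fun x : ℝ => g x * cauchyDens θ σ x) := by
  apply Integrable.bdd_mul (c := 1) _ hg.aestronglyMeasurable (ae_of_all _ fun x => by
    rw [Real.norm_eq_abs]; exact hgb x)
  have : cauchyDens θ σ
      = (fun u : ℝ => σ/(π*(σ^2+u^2))) ∘ (fun x => x - θ) := rfl
  rw [show Integrable (cauchyDens θ σ) volume
    = Integrable ((fun u : ℝ => σ/(π*(σ^2+u^2))) ∘ (fun x => x - θ)) volume from by rw [this]]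
  exact (integrable_kernel hσ).comp_sub_right θ

lemma norm_cauchyDens_int {σ : ℝ} (hσ : 0 < σ) (θ : ℝ) :
    ∫ x : ℝ, ‖cauchyDens θ σ x‖ = ∫ u : ℝ, σ/(π*(σ^2+u^2)) := by
  have h1 : ∀ x, ‖cauchyDens θ σ x‖ = cauchyDens θ σ x := by
    intro x
    rw [Real.norm_eq_abs, abs_of_pos]
    unfold cauchyDens
    positivity
  rw [funext h1]
  calc integral volume (cauchyDens θ σ)
      = ∫ x : ℝ, (fun u : ℝ => σ/(π*(σ^2+u^2))) (x - θ) := rfl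
    _ = ∫ u : ℝ, σ/(π*(σ^2+u^2)) := integral_sub_right_eq_self (fun u : ℝ => σ/(π*(σ^2+u^2))) θ

lemma char_cauchyDens {σ : ℝ} (hσ : 0 < σ) (θ t : ℝ) :
    ∫ x : ℝ, Real.cos (t*x) * cauchyDens θ σ x
      = Real.exp (-σ*|t|) * Real.cos (t*θ) := by
  have hshift : (fun x : ℝ => Real.cos (t*x) * cauchyDens θ σ x)
      = fun x => (fun u : ℝ => Real.cos (t*(u+θ)) * (σ/(π*(σ^2+u^2)))) (x - θ) := by
    funext x
    simp only [sub_add_cancel]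
    rfl
  rw [hshift, integral_sub_right_eq_self (fun u : ℝ => Real.cos (t*(u+θ)) * (σ/(π*(σ^2+u^2)))) θ]
  have hsplit : (fun u : ℝ => Real.cos (t*(u+θ)) * (σ/(π*(σ^2+u^2))))
      = fun u => Real.cos (t*θ) * (Real.cos (t*u) * (σ/(π*(σ^2+u^2))))
        - Real.sin (t*θ) * (Real.sin (t*u) * (σ/(π*(σ^2+u^2)))) := by
    funext u
    rw [mul_add, Real.cos_add]
    ring
  rw [hsplit, integral_sub (((integrable_cos_kernel hσ 0 0 _ (by continuity)
      (fun x => Real.abs_cos_le_one _))).const_mul _)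
    (((integrable_cos_kernel hσ 0 0 _ (by continuity)
      (fun x => Real.abs_sin_le_one _))).const_mul _),
    integral_const_mul, integral_const_mul, cos_kernel hσ t, sin_kernel hσ t]
  ring

lemma contF {σ t : ℝ} (hσ : 0 < σ) :
    Continuous (fun p : ℝ × ℝ => Real.cos (t*p.2) * cauchyDens p.1 σ p.2) := by
  apply Continuous.mul
  · exact Real.continuous_cos.comp (by continuity)
  · unfold cauchyDens
    apply Continuous.div continuous_const (by continuity)
    intro p
    positivity

lemma integrableF {σ t : ℝ} (hσ : 0 < σ) (P : Measure ℝ) [IsProbabilityMeasure P] :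
    Integrable (fun p : ℝ × ℝ => Real.cos (t*p.2) * cauchyDens p.1 σ p.2)
      (P.prod volume) := by
  have hmeas : AEStronglyMeasurable (fun p : ℝ × ℝ => Real.cos (t*p.2) * cauchyDens p.1 σ p.2) (P.prod volume) := (contF (σ := σ) (t := t) hσ).aestronglyMeasurable
  rw [integrable_prod_iff hmeas]
  constructor
  · filter_upwards with θ
    exact integrable_g_cauchyDens hσ θ _ (Real.continuous_cos.comp (by continuity))
      (fun x => Real.abs_cos_le_one _)
  · apply Integrable.mono' (integrable_const (∫ u : ℝ, σ/(π*(σ^2+u^2))))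
    · exact hmeas.norm.integral_prod_right'
    · filter_upwards with θ
      rw [Real.norm_eq_abs, abs_of_nonneg (integral_nonneg (fun x => norm_nonneg _))]
      calc ∫ x, ‖Real.cos (t*x) * cauchyDens θ σ x‖
          ≤ ∫ x, ‖cauchyDens θ σ x‖ := by
            apply integral_mono
            · exact (integrable_g_cauchyDens hσ θ _ (Real.continuous_cos.comp (by continuity))
                (fun x => Real.abs_cos_le_one _)).norm
            · exact ((integrable_g_cauchyDens hσ θ (fun _ => (1:ℝ)) continuous_const
                (fun x => by norm_num)).congr (by
                  filter_upwards with x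
                  rw [one_mul])).norm
            · intro x
              simp only [norm_mul]
              apply mul_le_of_le_one_left (norm_nonneg _)
              rw [Real.norm_eq_abs]
              exact Real.abs_cos_le_one _
        _ = ∫ u : ℝ, σ/(π*(σ^2+u^2)) := norm_cauchyDens_int hσ θ

lemma integrable_g_mix {σ t : ℝ} (hσ : 0 < σ) (P : Measure ℝ) [IsProbabilityMeasure P] :
    Integrable (fun x => Real.cos (t*x) * cauchyMix1 P σ x) := by
  have h := (integrableF (σ := σ) (t := t) hσ P).integral_prod_right
  apply h.congr
  filter_upwards with x
  unfold cauchyMix1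
  rw [← integral_const_mul]

lemma integrable_mix {σ : ℝ} (hσ : 0 < σ) (P : Measure ℝ) [IsProbabilityMeasure P] :
    Integrable (cauchyMix1 P σ) := by
  have h := integrable_g_mix (σ := σ) (t := 0) hσ P
  apply h.congr
  filter_upwards with x
  norm_num

lemma mix_char {σ : ℝ} (hσ : 0 < σ) (t : ℝ) (P : Measure ℝ) [IsProbabilityMeasure P] :
    ∫ x : ℝ, Real.cos (t*x) * cauchyMix1 P σ x
      = Real.exp (-σ*|t|) * ∫ θ, Real.cos (t*θ) ∂P := by
  have swap := integral_integral_swap (f := fun θ x => Real.cos (t*x) * cauchyDens θ σ x)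
    (μ := P) (ν := volume) (integrableF hσ P)
  have lhs : ∫ θ, ∫ x, Real.cos (t*x) * cauchyDens θ σ x ∂volume ∂P
      = Real.exp (-σ*|t|) * ∫ θ, Real.cos (t*θ) ∂P := by
    rw [← integral_const_mul]
    apply integral_congr_ae
    filter_upwards with θ
    rw [char_cauchyDens hσ θ t]
  have rhs : ∫ x : ℝ, ∫ θ, Real.cos (t*x) * cauchyDens θ σ x ∂P ∂volume
      = ∫ x : ℝ, Real.cos (t*x) * cauchyMix1 P σ x := by
    apply integral_congr_ae
    filter_upwards with x
    unfold cauchyMix1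
    rw [← integral_const_mul]
  rw [← rhs, ← swap, lhs]

lemma exp_neg_upper {u : ℝ} (hu : 0 ≤ u) : Real.exp (-u) ≤ 1 - u + u^2/2 := by
  have h1 : 1 + u + u^2/2 ≤ Real.exp u := by
    have := Real.sum_le_exp_of_nonneg hu 3
    simpa [Finset.sum_range_succ] using this
  have hpos : (0:ℝ) < 1 - u + u^2/2 := by nlinarith [sq_nonneg (u-1)]
  rw [Real.exp_neg, inv_eq_one_div, div_le_iff₀ (Real.exp_pos u)]
  nlinarith [mul_le_mul_of_nonneg_left h1 hpos.le, pow_le_pow_left₀ hu (le_refl u), sq_nonneg (u^2)]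

lemma integrable_cos_P (t : ℝ) (P : Measure ℝ) [IsProbabilityMeasure P] :
    Integrable (fun θ => Real.cos (t*θ)) P := by
  apply Integrable.mono' (integrable_const (1:ℝ))
  · exact (Real.continuous_cos.comp (by continuity)).aestronglyMeasurable
  · filter_upwards with θ
    rw [Real.norm_eq_abs]
    exact Real.abs_cos_le_one _

set_option maxHeartbeats 1000000 in
theorem univariate_cauchy_scale_separation
    (R lmin lmax : ℝ) (hR : 0 < R) (hlmin : 0 < lmin) (hl : lmin < lmax)
    (P P' : Measure ℝ) (hP : IsProbabilityMeasure P) (hP' : IsProbabilityMeasure P')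
    (hPsupp : P (Set.Icc (-R) R)ᶜ = 0) (hP'supp : P' (Set.Icc (-R) R)ᶜ = 0)
    (σ σ' : ℝ) (h₁ : lmin ≤ σ) (h₂ : σ ≤ σ') (h₃ : σ' ≤ lmax) :
    (σ' - σ) ^ 2 / (6 * lmax ^ 2 + 4 * R ^ 2) ≤
      ∫ x, |cauchyMix1 P σ x - cauchyMix1 P' σ' x| := by
  have hσ : 0 < σ := lt_of_lt_of_le hlmin h₁
  have hσ' : 0 < σ' := lt_of_lt_of_le hσ h₂
  rcases eq_or_lt_of_le h₂ with heq | hlt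
  · rw [← heq]
    simp only [sub_self, ne_eq, OfNat.ofNat_ne_zero, not_false_eq_true, zero_pow, zero_div]
    exact integral_nonneg (fun x => abs_nonneg _)
  obtain ⟨δ, hδdef⟩ : ∃ x : ℝ, x = σ' - σ := ⟨_, rfl⟩
  obtain ⟨M, hM⟩ : ∃ x : ℝ, x = lmax^2 := ⟨_, rfl⟩
  obtain ⟨r, hr⟩ : ∃ x : ℝ, x = R^2 := ⟨_, rfl⟩
  obtain ⟨K, hK⟩ : ∃ x : ℝ, x = 3*M + 2*r := ⟨_, rfl⟩
  have hδ : 0 < δ := by rw [hδdef]; linarith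
  have hlmax : 0 < lmax := lt_trans hlmin hl
  have hMpos : 0 < M := by rw [hM]; positivity
  have hrpos : 0 < r := by rw [hr]; positivity
  have hKpos : 0 < K := by rw [hK]; linarith
  obtain ⟨t, htdef⟩ : ∃ x : ℝ, x = δ / K := ⟨_, rfl⟩
  have ht : 0 < t := by rw [htdef]; exact div_pos hδ hKpos
  have htK : t * K = δ := by rw [htdef]; field_simp
  have hδle : δ ≤ lmax := by rw [hδdef]; linarith
  have hδsq : δ^2 ≤ M := by rw [hM]; nlinarith
  have hσle : σ ≤ lmax := le_trans h₂ h₃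
  -- Step 1: test function bound
  have step1 : ∫ x, (Real.cos (t*x) * cauchyMix1 P σ x - Real.cos (t*x) * cauchyMix1 P' σ' x)
      ≤ ∫ x, |cauchyMix1 P σ x - cauchyMix1 P' σ' x| := by
    apply integral_mono
    · exact (integrable_g_mix hσ P).sub (integrable_g_mix hσ' P')
    · exact ((integrable_mix hσ P).sub (integrable_mix hσ' P')).abs
    · intro x
      dsimp only
      have h1 : Real.cos (t*x) * cauchyMix1 P σ x - Real.cos (t*x) * cauchyMix1 P' σ' x
          = Real.cos (t*x) * (cauchyMix1 P σ x - cauchyMix1 P' σ' x) := by ring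
      rw [h1]
      calc Real.cos (t*x) * (cauchyMix1 P σ x - cauchyMix1 P' σ' x)
          ≤ |Real.cos (t*x) * (cauchyMix1 P σ x - cauchyMix1 P' σ' x)| := le_abs_self _
        _ = |Real.cos (t*x)| * |cauchyMix1 P σ x - cauchyMix1 P' σ' x| := abs_mul _ _
        _ ≤ 1 * |cauchyMix1 P σ x - cauchyMix1 P' σ' x| :=
            mul_le_mul_of_nonneg_right (Real.abs_cos_le_one _) (abs_nonneg _)
        _ = |cauchyMix1 P σ x - cauchyMix1 P' σ' x| := one_mul _
  -- Step 2: compute the test integral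
  have step2 : ∫ x, (Real.cos (t*x) * cauchyMix1 P σ x - Real.cos (t*x) * cauchyMix1 P' σ' x)
      = Real.exp (-σ*t) * ∫ θ, Real.cos (t*θ) ∂P
        - Real.exp (-σ'*t) * ∫ θ, Real.cos (t*θ) ∂P' := by
    rw [integral_sub (integrable_g_mix hσ P) (integrable_g_mix hσ' P'),
      mix_char hσ t P, mix_char hσ' t P', abs_of_pos ht]
  -- Step 3: bounds on the θ-integrals
  have haeP : ∀ᵐ θ ∂P, θ ∈ Set.Icc (-R) R := by
    rw [ae_iff]
    exact hPsupp
  have step3 : 1 - t^2*r/2 ≤ ∫ θ, Real.cos (t*θ) ∂P := by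
    have := integral_mono_ae (integrable_const (1 - t^2*r/2)) (integrable_cos_P t P) ?_
    · rwa [integral_const, probReal_univ, one_smul] at this
    · filter_upwards [haeP] with θ hθ
      have hcos := Real.one_sub_sq_div_two_le_cos (x := t*θ)
      have hθ2 : θ^2 ≤ r := by
        rw [hr]
        rcases hθ with ⟨ha, hb⟩
        nlinarith
      have : (t*θ)^2 ≤ t^2*r := by
        rw [mul_pow]
        exact mul_le_mul_of_nonneg_left hθ2 (sq_nonneg t)
      linarith
  have step4 : ∫ θ, Real.cos (t*θ) ∂P' ≤ 1 := by
    have := integral_mono_ae (integrable_cos_P t P') (integrable_const (1:ℝ)) ?_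
    · rwa [integral_const, probReal_univ, one_smul] at this
    · filter_upwards with θ
      exact Real.cos_le_one _
  -- numeric bounds
  have hσt0 : 0 ≤ σ*t := (mul_pos hσ ht).le
  have hE1low : 1 - σ*t ≤ Real.exp (-σ*t) := by
    have := Real.add_one_le_exp (-σ*t)
    linarith
  have hE2 : Real.exp (-σ'*t) = Real.exp (-σ*t) * Real.exp (-(δ*t)) := by
    rw [← Real.exp_add]
    congr 1
    rw [hδdef]
    ring
  have hE2up : Real.exp (-(δ*t)) ≤ 1 - δ*t + (δ*t)^2/2 := exp_neg_upper (by positivity)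
  have hσδ : σ*(t*K) ≤ M := by rw [htK, hM]; nlinarith
  have hE1 : 2/3 ≤ Real.exp (-σ*t) := by
    have hσδ' : σ*t*K ≤ M := by rw [← mul_assoc] at hσδ; exact hσδ
    have h5 : σ*t*(3*M+2*r) ≤ M := by rw [← hK]; linarith
    have hσt : σ*t ≤ 1/3 := by
      nlinarith [h5, mul_nonneg (mul_nonneg hσ.le ht.le) hrpos.le, hMpos]
    linarith
  have h2K : 2*(δ^2+r) ≤ K := by rw [hK]; linarith
  have h3 : K*t^2*(2*(δ^2+r)) ≤ K*t^2*K := mul_le_mul_of_nonneg_left h2K (by positivity)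
  have h4 : K*t^2*K = δ^2 := by nlinarith [htK]
  have e1 : δ*t*K = δ^2 := by nlinarith [htK]
  have hApoly : 3*δ^2 ≤ 4*K*(1 - t^2*r/2 - Real.exp (-(δ*t))) := by
    have hpoly : 3*δ^2 ≤ 4*K*(δ*t - (δ*t)^2/2 - t^2*r/2) := by nlinarith [e1, h3, h4]
    nlinarith [hE2up, hKpos]
  have hApos : 0 ≤ 1 - t^2*r/2 - Real.exp (-(δ*t)) := by nlinarith
  have step5 : δ^2/(2*K) ≤ Real.exp (-σ*t) * (1 - t^2*r/2) - Real.exp (-σ'*t) := by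
    rw [hE2, div_le_iff₀ (by positivity)]
    have key : Real.exp (-σ*t) * (1 - t^2*r/2) - Real.exp (-σ*t) * Real.exp (-(δ*t))
        = Real.exp (-σ*t) * (1 - t^2*r/2 - Real.exp (-(δ*t))) := by ring
    rw [key]
    nlinarith [mul_le_mul_of_nonneg_right hE1 hApos, hApoly]
  -- Assemble
  have hfinal : δ^2/(2*K)
      ≤ ∫ x, (Real.cos (t*x) * cauchyMix1 P σ x - Real.cos (t*x) * cauchyMix1 P' σ' x) := by
    rw [step2]
    have hcP' : Real.exp (-σ'*t) * ∫ θ, Real.cos (t*θ) ∂P' ≤ Real.exp (-σ'*t) :=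
      mul_le_of_le_one_right (Real.exp_pos _).le step4
    have hcP : Real.exp (-σ*t) * (1 - t^2*r/2) ≤ Real.exp (-σ*t) * ∫ θ, Real.cos (t*θ) ∂P :=
      mul_le_mul_of_nonneg_left step3 (Real.exp_pos _).le
    linarith
  have hdenom : 6 * lmax ^ 2 + 4 * R ^ 2 = 2*K := by rw [hK, hM, hr]; ring
  rw [← hδdef, hdenom]
  exact le_trans hfinal step1
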